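/- Let (M,d) be a metric space, x̄ ∈ M, and Φ : [t₀,∞) × M → M a flow with Φ(t₀,x)=x. Suppose x̄ is uniformly Lyapunov stable in the sense that for every ε > 0 there exists δ > 0 such that d(x₀,x̄) < δ implies d(Φ(t,x₀),x̄) < ε for all t ≥ t₀. Then there exist r > 0 and a class K function α : [0,r) → ℝ≥0 such that d(Φ(t,x₀),x̄) ≤ α(d(x₀,x̄)) for all x₀ with d(x₀,x̄) < r and all t ≥ t₀. -/

import Mathlib

/-- Uniform Lyapunov stability yields a class K bound on trajectories:
there exist `r > 0` and a class K function `α : [0,r) → ℝ≥0` with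
`d(Φ(t,x₀),xbar) ≤ α(d(x₀,xbar))` for `d(x₀,xbar) < r`, `t ≥ t₀`. -/
theorem stmt_2 {M : Type*} [MetricSpace M]
    (xbar : M) (t₀ : ℝ) (Φ : ℝ → M → M)
    (hinit : ∀ x : M, Φ t₀ x = x)
    (hstab : ∀ ε > 0, ∃ δ > 0, ∀ x₀ : M, dist x₀ xbar < δ →
      ∀ t ≥ t₀, dist (Φ t x₀) xbar < ε) :
    ∃ r > 0, ∃ α : ℝ → ℝ,
      ContinuousOn α (Set.Ico 0 r) ∧
      StrictMonoOn α (Set.Ico 0 r) ∧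
      α 0 = 0 ∧
      (∀ s ∈ Set.Ico 0 r, 0 ≤ α s) ∧
      (∀ x₀ : M, dist x₀ xbar < r → ∀ t ≥ t₀, dist (Φ t x₀) xbar ≤ α (dist x₀ xbar)) := by
  choose δ hδpos hδ using fun n : ℕ => hstab ((1/2 : ℝ) ^ n) (by positivity)
  set f : ℕ → ℝ → ℝ := fun n s => (1/2 : ℝ) ^ n * min 1 (max 0 (s / δ (n+1))) with hf
  have hf0 : ∀ n s, 0 ≤ f n s := by
    intro n s
    apply mul_nonneg (by positivity)
    exact le_min zero_le_one (le_max_left _ _)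
  have hfle : ∀ n s, f n s ≤ (1/2 : ℝ) ^ n := by
    intro n s
    calc f n s ≤ (1/2 : ℝ) ^ n * 1 :=
          mul_le_mul_of_nonneg_left (min_le_left _ _) (by positivity)
      _ = (1/2 : ℝ) ^ n := mul_one _
  have hsummg : Summable (fun n : ℕ => (1/2 : ℝ) ^ n) :=
    summable_geometric_of_lt_one (by norm_num) (by norm_num)
  have hsumm : ∀ s, Summable (fun n => f n s) := fun s =>
    Summable.of_nonneg_of_le (fun n => hf0 n s) (fun n => hfle n s) hsummg
  have hfmono : ∀ n, ∀ s s' : ℝ, s ≤ s' → f n s ≤ f n s' := by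
    intro n s s' h
    apply mul_le_mul_of_nonneg_left _ (by positivity)
    exact min_le_min le_rfl (max_le_max le_rfl
      (div_le_div_of_nonneg_right h (hδpos (n+1)).le))
  refine ⟨δ 0, hδpos 0, fun s => s + ∑' n, f n s, ?_, ?_, ?_, ?_, ?_⟩
  · apply Continuous.continuousOn
    apply continuous_id.add
    apply continuous_tsum (u := fun n : ℕ => (1/2 : ℝ) ^ n) _ hsummg
    · intro n s
      rw [Real.norm_eq_abs, abs_of_nonneg (hf0 n s)]
      exact hfle n s
    · intro n
      exact continuous_const.mul ((continuous_const.min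
        (continuous_const.max (continuous_id.div_const _))))
  · intro s _ s' _ h
    have := Summable.tsum_le_tsum (fun n => hfmono n s s' h.le) (hsumm s) (hsumm s')
    dsimp only
    linarith
  · have : ∀ n : ℕ, f n 0 = 0 := by
      intro n
      simp [hf]
    simp [this]
  · intro s hs
    have : 0 ≤ ∑' n, f n s := tsum_nonneg (fun n => hf0 n s)
    have := hs.1
    dsimp only
    linarith
  · intro x₀ hx₀ t ht
    set d := dist x₀ xbar with hd
    have hd0 : 0 ≤ d := dist_nonneg
    have hα0 : 0 ≤ d + ∑' n, f n d := by
      have : 0 ≤ ∑' n, f n d := tsum_nonneg (fun n => hf0 n d)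
      linarith
    by_cases hall : ∀ m : ℕ, d < δ m
    · -- trajectory stays at xbar
      have hz : dist (Φ t x₀) xbar ≤ 0 := by
        by_contra h
        push_neg at h
        obtain ⟨m, hm⟩ := exists_pow_lt_of_lt_one h (by norm_num : (1/2 : ℝ) < 1)
        exact absurd (hδ m x₀ (hall m) t ht) (not_lt.2 hm.le)
      dsimp only
      linarith
    · push_neg at hall
      classical
      have hex : ∃ m, δ m ≤ d := hall
      set m₀ := Nat.find hex with hm₀
      have hm₀le : δ m₀ ≤ d := Nat.find_spec hex
      have hm₀ne : m₀ ≠ 0 := by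
        intro h
        rw [h] at hm₀le
        exact absurd hx₀ (not_lt.2 hm₀le)
      obtain ⟨n, hn⟩ := Nat.exists_eq_succ_of_ne_zero hm₀ne
      have hdn : d < δ n := by
        by_contra h
        push_neg at h
        have : m₀ ≤ n := Nat.find_le h
        omega
      have hΦ : dist (Φ t x₀) xbar < (1/2 : ℝ) ^ n := hδ n x₀ hdn t ht
      have hfn : f n d = (1/2 : ℝ) ^ n := by
        have h1 : (1:ℝ) ≤ d / δ (n+1) := by
          rw [le_div_iff₀ (hδpos (n+1)), one_mul]
          have : n + 1 = m₀ := by omega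
          rw [this]
          exact hm₀le
        rw [hf]
        simp only
        rw [max_eq_right (le_trans zero_le_one h1), min_eq_left h1, mul_one]
      have hT : f n d ≤ ∑' k, f k d :=
        Summable.le_tsum (hsumm d) n (fun k _ => hf0 k d)
      calc dist (Φ t x₀) xbar ≤ (1/2 : ℝ) ^ n := hΦ.le
        _ = f n d := hfn.symm
        _ ≤ d + ∑' k, f k d := by linarith
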